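/- arXiv:2403.16343 — 3 statements merged into one kernel-verified Lean document; each statement's English description precedes it below -/
import Mathlib

section
/- Let n be a positive integer, let a ∈ ℂⁿ, and let D ∈ ℂ^{n×n} be Hermitian positive definite. Then the infimum over u ∈ ℂⁿ and w > 0 of w·(|1 − u† a|² + u† D u) − log w − 1 equals −log(1 + a† D⁻¹ a), and it is attained at u = (D + a a†)⁻¹ a and w = (1 − a† (D + a a†)⁻¹ a)⁻¹. -/
open Matrix
open scoped ComplexOrder

/-- The weighted-MSE objective `w·(|1 − u† a|² + u† D u) − log w − 1`. -/
noncomputable def wmseObj {n : ℕ} (a : Fin n → ℂ) (D : Matrix (Fin n) (Fin n) ℂ)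
    (u : Fin n → ℂ) (w : ℝ) : ℝ :=
  w * (Complex.normSq (1 - star u ⬝ᵥ a) + (star u ⬝ᵥ D *ᵥ u).re) - Real.log w - 1

lemma vecMulVec_mulVec_eq {n : ℕ} (a b x : Fin n → ℂ) :
    vecMulVec a b *ᵥ x = (b ⬝ᵥ x) • a := by
  funext i
  simp only [mulVec, dotProduct, vecMulVec_apply, Pi.smul_apply, smul_eq_mul,
    Finset.sum_mul, Finset.mul_sum]
  exact Finset.sum_congr rfl fun j _ => by ring

/-- The composite weighted-MSE identity: for Hermitian positive definite `D`, the infimum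
over `u ∈ ℂⁿ` and `w > 0` of `w·(|1 − u† a|² + u† D u) − log w − 1` equals
`−log(1 + a† D⁻¹ a)`, attained at `u = (D + a a†)⁻¹ a` and
`w = (1 − a† (D + a a†)⁻¹ a)⁻¹`. -/
theorem wmse_transform {n : ℕ} (hn : 0 < n) (a : Fin n → ℂ)
    (D : Matrix (Fin n) (Fin n) ℂ) (hD : D.PosDef) :
    IsLeast {y : ℝ | ∃ (u : Fin n → ℂ) (w : ℝ), 0 < w ∧ y = wmseObj a D u w}
      (- Real.log (1 + (star a ⬝ᵥ D⁻¹ *ᵥ a).re)) ∧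
    0 < (1 - (star a ⬝ᵥ (D + vecMulVec a (star a))⁻¹ *ᵥ a).re)⁻¹ ∧
    wmseObj a D ((D + vecMulVec a (star a))⁻¹ *ᵥ a)
        ((1 - (star a ⬝ᵥ (D + vecMulVec a (star a))⁻¹ *ᵥ a).re)⁻¹) =
      - Real.log (1 + (star a ⬝ᵥ D⁻¹ *ᵥ a).re) := by
  classical
  set M : Matrix (Fin n) (Fin n) ℂ := D + vecMulVec a (star a) with hM_def
  -- `vecMulVec a (star a)` is positive semidefinite
  have haa : (vecMulVec a (star a)).PosSemidef := by
    rw [posSemidef_iff_dotProduct_mulVec]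
    constructor
    · ext i j
      simp [conjTranspose_apply, vecMulVec_apply, mul_comm]
    · intro x
      rw [vecMulVec_mulVec_eq, dotProduct_smul, smul_eq_mul, star_dotProduct]
      exact star_mul_self_nonneg _
  have hMpd : M.PosDef := hD.add_posSemidef haa
  have hMherm : Mᴴ = M := hMpd.isHermitian
  have hDdet : IsUnit D.det := hD.det_pos.ne'.isUnit
  have hMdet : IsUnit M.det := hMpd.det_pos.ne'.isUnit
  set s : ℂ := star a ⬝ᵥ D⁻¹ *ᵥ a with hs_def
  have hs_nonneg : 0 ≤ s := hD.inv.posSemidef.dotProduct_mulVec_nonneg a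
  have hs_re : 0 ≤ s.re := (Complex.nonneg_iff.mp hs_nonneg).1
  have hs_im : s.im = 0 := ((Complex.nonneg_iff.mp hs_nonneg).2).symm
  have hs_coe : (s.re : ℂ) = s := Complex.ext (by simp) (by simp [hs_im])
  have h1s_pos : (0 : ℝ) < 1 + s.re := by linarith
  have h1s : (1 : ℂ) + s ≠ 0 := by
    intro h
    have : ((1 : ℂ) + s).re = 0 := by rw [h]; simp
    simp only [Complex.add_re, Complex.one_re] at this
    linarith
  set v : Fin n → ℂ := M⁻¹ *ᵥ a with hv_def
  -- explicit formula for v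
  have hMv : M *ᵥ v = a := by
    rw [hv_def, mulVec_mulVec, Matrix.mul_nonsing_inv M hMdet, one_mulVec]
  have hv : v = ((1 : ℂ) + s)⁻¹ • (D⁻¹ *ᵥ a) := by
    have hMr : M *ᵥ (((1 : ℂ) + s)⁻¹ • (D⁻¹ *ᵥ a)) = a := by
      rw [mulVec_smul]
      have : M *ᵥ (D⁻¹ *ᵥ a) = ((1 : ℂ) + s) • a := by
        rw [hM_def, add_mulVec, vecMulVec_mulVec_eq, mulVec_mulVec,
          Matrix.mul_nonsing_inv D hDdet, one_mulVec, ← hs_def]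
        funext i; simp; ring
      rw [this, smul_smul, inv_mul_cancel₀ h1s, one_smul]
    have := congrArg (fun x => M⁻¹ *ᵥ x) hMr
    simpa only [mulVec_mulVec, Matrix.nonsing_inv_mul M hMdet, one_mulVec] using this.symm
  have hav : star a ⬝ᵥ v = ((1 : ℂ) + s)⁻¹ * s := by
    rw [hv, dotProduct_smul, smul_eq_mul, ← hs_def]
  have hav_re : (star a ⬝ᵥ v).re = s.re / (1 + s.re) := by
    have : star a ⬝ᵥ v = ((s.re / (1 + s.re) : ℝ) : ℂ) := by
      rw [hav]
      rw [div_eq_inv_mul]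
      push_cast
      rw [hs_coe]
    rw [this, Complex.ofReal_re]
  set m : ℝ := 1 - (star a ⬝ᵥ v).re with hm_def
  have hm_eq : m = (1 + s.re)⁻¹ := by
    rw [hm_def, hav_re]
    field_simp
    ring
  have hm_pos : 0 < m := by rw [hm_eq]; positivity
  have hlogm : Real.log m = - Real.log (1 + s.re) := by
    rw [hm_eq, Real.log_inv]
  -- star v ᵥ* M = star a
  have hvM : star v ᵥ* M = star a := by
    have := star_mulVec M v
    rw [hMv, hMherm] at this
    exact this.symm
  -- quadratic expansion
  have key : ∀ u : Fin n → ℂ,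
      Complex.normSq (1 - star u ⬝ᵥ a) + (star u ⬝ᵥ D *ᵥ u).re
        = m + (star (u - v) ⬝ᵥ M *ᵥ (u - v)).re := by
    intro u
    have e2 : star u ⬝ᵥ M *ᵥ u
        = star u ⬝ᵥ D *ᵥ u + (star a ⬝ᵥ u) * (star u ⬝ᵥ a) := by
      rw [hM_def, add_mulVec, dotProduct_add, vecMulVec_mulVec_eq, dotProduct_smul,
        smul_eq_mul]
    have e3 : star (star u ⬝ᵥ a) = star a ⬝ᵥ u := by
      rw [star_dotProduct]; exact star_star _
    have e1 : star (u - v) ⬝ᵥ M *ᵥ (u - v)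
        = star u ⬝ᵥ M *ᵥ u - star u ⬝ᵥ a - star a ⬝ᵥ u + star a ⬝ᵥ v := by
      have h1 : star v ⬝ᵥ M *ᵥ u = star a ⬝ᵥ u := by
        rw [dotProduct_mulVec, hvM]
      have h2 : star v ⬝ᵥ M *ᵥ v = star a ⬝ᵥ v := by
        rw [dotProduct_mulVec, hvM]
      have h2' : star v ⬝ᵥ a = star a ⬝ᵥ v := by rw [← h2, hMv]
      rw [star_sub, sub_dotProduct, mulVec_sub, dotProduct_sub, dotProduct_sub,
        hMv, h1, h2']
      ring
    have ckey : (((Complex.normSq (1 - star u ⬝ᵥ a) : ℝ) : ℂ)) + star u ⬝ᵥ D *ᵥ u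
        = (1 - star a ⬝ᵥ v) + star (u - v) ⬝ᵥ M *ᵥ (u - v) := by
      have hnsq : ((Complex.normSq (1 - star u ⬝ᵥ a) : ℝ) : ℂ)
          = star (1 - star u ⬝ᵥ a) * (1 - star u ⬝ᵥ a) := by
        rw [Complex.star_def]; exact Complex.normSq_eq_conj_mul_self
      rw [hnsq, star_sub, star_one, e3, e1, e2]
      ring
    have := congrArg Complex.re ckey
    simp only [Complex.add_re, Complex.sub_re, Complex.ofReal_re, Complex.one_re] at this
    rw [hm_def]
    linarith
  -- objective value at the candidate minimizer
  have hval : wmseObj a D v m⁻¹ = - Real.log (1 + s.re) := by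
    have hEv : Complex.normSq (1 - star v ⬝ᵥ a) + (star v ⬝ᵥ D *ᵥ v).re = m := by
      rw [key v]
      simp
    rw [wmseObj, hEv, Real.log_inv, inv_mul_cancel₀ hm_pos.ne', hlogm]
    ring
  refine ⟨⟨⟨v, m⁻¹, inv_pos.mpr hm_pos, hval.symm ▸ rfl⟩, ?_⟩,
    inv_pos.mpr hm_pos, hval⟩
  · -- lower bound
    rintro y ⟨u, w, hw, rfl⟩
    have hE : m ≤ Complex.normSq (1 - star u ⬝ᵥ a) + (star u ⬝ᵥ D *ᵥ u).re := by
      rw [key u]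
      have := hMpd.posSemidef.re_dotProduct_nonneg (u - v)
      simp only [RCLike.re_to_complex] at this
      linarith
    have h1 : Real.log (w * m) ≤ w * m - 1 :=
      Real.log_le_sub_one_of_pos (mul_pos hw hm_pos)
    rw [Real.log_mul hw.ne' hm_pos.ne'] at h1
    have h2 : w * m ≤ w * (Complex.normSq (1 - star u ⬝ᵥ a) + (star u ⬝ᵥ D *ᵥ u).re) :=
      mul_le_mul_of_nonneg_left hE hw.le
    rw [wmseObj, ← hlogm]
    linarith
end

section
/- Consider the downlink MU-MIMO model with users indexed by the finite set I, channel matrices H_{b'→(k,b)} ∈ ℂ^{N×M}, transmit beamformers v_{k,b} ∈ ℂ^M collected in V, noise power σ² > 0, interference-plus-noise covariances B_{k,b}(V), rates r_{k,b}(V), and sum-least-m utility f_m with 1 ≤ m ≤ |I|. For each family of auxiliary vectors X = (χ_{k,b})_{(k,b)∈I} with χ_{k,b} ∈ ℂ^N, define the transformed rate r̂_{k,b}(X,V) = log(1 + 2·Re(χ_{k,b}† H_{b→(k,b)} v_{k,b}) − χ_{k,b}† B_{k,b}(V) χ_{k,b}) whenever the argument of the logarithm is positive. Then for every V, the supremum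 over all X for which every such logarithm argument is positive of f_m((r̂_{k,b}(X,V))_{(k,b)∈I}) equals f_m((r_{k,b}(V))_{(k,b)∈I}), and this supremum is attained at χ_{k,b} = B_{k,b}(V)⁻¹ H_{b→(k,b)} v_{k,b} for all (k,b). -/
open Matrix

/-- The sum-least-`m` (SLqP) utility: the minimum over all subsets `S` of the index set
with `|S| = m` of `∑_{i∈S} x i`, i.e. the sum of the `m` smallest entries of `x`. -/
noncomputable def sumLeast {I : Type*} [Fintype I] (m : ℕ) (x : I → ℝ) : ℝ :=
  sInf {s : ℝ | ∃ S : Finset I, S.card = m ∧ s = ∑ i ∈ S, x i}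

/-- The sum-greatest-`m` (SGqP) utility: the maximum over all subsets `S` of the index set
with `|S| = m` of `∑_{i∈S} x i`, i.e. the sum of the `m` largest entries of `x`. -/
noncomputable def sumGreatest {I : Type*} [Fintype I] (m : ℕ) (x : I → ℝ) : ℝ :=
  sSup {s : ℝ | ∃ S : Finset I, S.card = m ∧ s = ∑ i ∈ S, x i}

section Model

variable {I B' : Type*} [Fintype I] [DecidableEq I] {N M : ℕ}

/-- Interference-plus-noise covariance of user `i`:
`B_i(V) = σ² I + ∑_{j ≠ i} (H_{cell j → i} v_j)(H_{cell j → i} v_j)†`. -/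
noncomputable def covIN (cell : I → B') (H : B' → I → Matrix (Fin N) (Fin M) ℂ)
    (σ2 : ℝ) (V : I → Fin M → ℂ) (i : I) : Matrix (Fin N) (Fin N) ℂ :=
  (σ2 : ℂ) • (1 : Matrix (Fin N) (Fin N) ℂ) +
    ∑ j ∈ Finset.univ.erase i,
      vecMulVec (H (cell j) i *ᵥ V j) (star (H (cell j) i *ᵥ V j))

/-- Achieved rate of user `i`:
`r_i(V) = log(1 + v_i† H_i† B_i(V)⁻¹ H_i v_i)`. -/
noncomputable def rate (cell : I → B') (H : B' → I → Matrix (Fin N) (Fin M) ℂ)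
    (σ2 : ℝ) (V : I → Fin M → ℂ) (i : I) : ℝ :=
  Real.log (1 + (star (H (cell i) i *ᵥ V i) ⬝ᵥ
    (covIN cell H σ2 V i)⁻¹ *ᵥ (H (cell i) i *ᵥ V i)).re)

/-- The argument of the logarithm in the QFT-transformed rate:
`φ_i(X,V) = 1 + 2 Re(χ_i† H_i v_i) − χ_i† B_i(V) χ_i`. -/
noncomputable def qftArg (cell : I → B') (H : B' → I → Matrix (Fin N) (Fin M) ℂ)
    (σ2 : ℝ) (X : I → Fin N → ℂ) (V : I → Fin M → ℂ) (i : I) : ℝ :=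
  1 + 2 * (star (X i) ⬝ᵥ (H (cell i) i *ᵥ V i)).re -
    (star (X i) ⬝ᵥ (covIN cell H σ2 V i) *ᵥ X i).re

end Model

section Aux
open ComplexOrder

variable {I B' : Type*} [Fintype I] [DecidableEq I] {N M : ℕ}

lemma vecMulVec_star_posSemidef (w : Fin N → ℂ) :
    (vecMulVec w (star w)).PosSemidef := by
  have h : vecMulVec w (star w) = replicateCol Unit w * (replicateCol Unit w)ᴴ := by
    rw [Matrix.conjTranspose_replicateCol, ← Matrix.vecMulVec_eq]
  rw [h]
  exact Matrix.posSemidef_self_mul_conjTranspose _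

lemma covIN_posDef (cell : I → B') (H : B' → I → Matrix (Fin N) (Fin M) ℂ)
    {σ2 : ℝ} (hσ : 0 < σ2) (V : I → Fin M → ℂ) (i : I) :
    (covIN cell H σ2 V i).PosDef := by
  unfold covIN
  apply Matrix.PosDef.add_posSemidef
  · rw [Matrix.smul_one_eq_diagonal]
    rw [Matrix.posDef_diagonal_iff]
    intro _
    exact_mod_cast hσ
  · have : ∀ S : Finset I, (∑ j ∈ S,
        vecMulVec (H (cell j) i *ᵥ V j) (star (H (cell j) i *ᵥ V j))).PosSemidef := by
      intro S
      induction S using Finset.induction_on with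
      | empty => simpa using (Matrix.PosSemidef.zero (n := Fin N) (R := ℂ))
      | @insert j S hj ih =>
        rw [Finset.sum_insert hj]
        exact (vecMulVec_star_posSemidef _).add ih
    exact this _

lemma quad_complete {Bm : Matrix (Fin N) (Fin N) ℂ} (hB : Bm.PosDef)
    (w χ : Fin N → ℂ) :
    2 * (star χ ⬝ᵥ w).re - (star χ ⬝ᵥ Bm *ᵥ χ).re ≤ (star w ⬝ᵥ Bm⁻¹ *ᵥ w).re := by
  set χ₀ : Fin N → ℂ := Bm⁻¹ *ᵥ w with hχ₀
  have hunit : IsUnit Bm.det := (Matrix.isUnit_iff_isUnit_det _).1 hB.isUnit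
  have hBχ₀ : Bm *ᵥ χ₀ = w := by
    rw [hχ₀, Matrix.mulVec_mulVec, Matrix.mul_nonsing_inv _ hunit, Matrix.one_mulVec]
  have hb : star χ₀ ⬝ᵥ Bm *ᵥ χ = star (star χ ⬝ᵥ w) := by
    rw [Matrix.star_dotProduct, Matrix.star_mulVec,
      ← Matrix.dotProduct_mulVec, hB.isHermitian.eq, hBχ₀]
  have hc : star χ₀ ⬝ᵥ w = star w ⬝ᵥ Bm⁻¹ *ᵥ w := by
    rw [hχ₀, Matrix.star_mulVec, ← Matrix.dotProduct_mulVec, hB.isHermitian.inv.eq]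
  have hpos : 0 ≤ (star (χ - χ₀) ⬝ᵥ Bm *ᵥ (χ - χ₀)).re := by
    have := hB.posSemidef.re_dotProduct_nonneg (χ - χ₀)
    simpa using this
  have hexp : star (χ - χ₀) ⬝ᵥ Bm *ᵥ (χ - χ₀) =
      star χ ⬝ᵥ Bm *ᵥ χ - star χ ⬝ᵥ w - star (star χ ⬝ᵥ w) + star w ⬝ᵥ Bm⁻¹ *ᵥ w := by
    rw [star_sub, sub_dotProduct, Matrix.mulVec_sub, dotProduct_sub,
      dotProduct_sub, hBχ₀, hb, hc]
    ring
  rw [hexp] at hpos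
  simp only [Complex.add_re, Complex.sub_re, Complex.star_def, Complex.conj_re] at hpos
  linarith

lemma quad_complete_eq {Bm : Matrix (Fin N) (Fin N) ℂ} (hB : Bm.PosDef)
    (w : Fin N → ℂ) :
    2 * (star (Bm⁻¹ *ᵥ w) ⬝ᵥ w).re - (star (Bm⁻¹ *ᵥ w) ⬝ᵥ Bm *ᵥ (Bm⁻¹ *ᵥ w)).re =
      (star w ⬝ᵥ Bm⁻¹ *ᵥ w).re := by
  have hunit : IsUnit Bm.det := (Matrix.isUnit_iff_isUnit_det _).1 hB.isUnit
  have hBχ₀ : Bm *ᵥ (Bm⁻¹ *ᵥ w) = w := by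
    rw [Matrix.mulVec_mulVec, Matrix.mul_nonsing_inv _ hunit, Matrix.one_mulVec]
  have hc : star (Bm⁻¹ *ᵥ w) ⬝ᵥ w = star w ⬝ᵥ Bm⁻¹ *ᵥ w := by
    rw [Matrix.star_mulVec, ← Matrix.dotProduct_mulVec, hB.isHermitian.inv.eq]
  rw [hBχ₀, hc]
  ring

lemma sumLeast_le_sumLeast {m : ℕ} (hm : m ≤ Fintype.card I) {x y : I → ℝ}
    (h : ∀ i, x i ≤ y i) : sumLeast m x ≤ sumLeast m y := by
  have hfin : ∀ z : I → ℝ,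
      {s : ℝ | ∃ S : Finset I, S.card = m ∧ s = ∑ i ∈ S, z i}.Finite := by
    intro z
    apply Set.Finite.subset (Set.finite_range (fun S : Finset I => ∑ i ∈ S, z i))
    rintro s ⟨S, _, rfl⟩
    exact ⟨S, rfl⟩
  have hne : ∀ z : I → ℝ,
      {s : ℝ | ∃ S : Finset I, S.card = m ∧ s = ∑ i ∈ S, z i}.Nonempty := by
    intro z
    obtain ⟨S, _, hS⟩ := Finset.exists_subset_card_eq
      (s := (Finset.univ : Finset I)) (n := m) (by rw [Finset.card_univ]; exact hm)
    exact ⟨∑ i ∈ S, z i, S, hS, rfl⟩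
  obtain ⟨S, hScard, hSeq⟩ := (hne y).csInf_mem (hfin y)
  calc sumLeast m x ≤ ∑ i ∈ S, x i :=
        csInf_le (hfin x).bddBelow ⟨S, hScard, rfl⟩
    _ ≤ ∑ i ∈ S, y i := Finset.sum_le_sum fun i _ => h i
    _ = sumLeast m y := hSeq.symm

end Aux
open ComplexOrder

/-- Theorem 1 (QFT reformulation of the SLqP rate problem): for every `V`, the supremum
over all auxiliary `X` making every logarithm argument positive of
`f_m((log φ_{k,b}(X,V))_{k,b})` equals `f_m((r_{k,b}(V))_{k,b})`, and this supremum is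
attained at `χ_{k,b} = B_{k,b}(V)⁻¹ H_{b→(k,b)} v_{k,b}`. -/
theorem qft_slqp_equivalence {I B' : Type*} [Fintype I] [DecidableEq I] {N M : ℕ}
    (cell : I → B') (H : B' → I → Matrix (Fin N) (Fin M) ℂ)
    (σ2 : ℝ) (hσ : 0 < σ2) (m : ℕ) (hm1 : 1 ≤ m) (hm2 : m ≤ Fintype.card I)
    (V : I → Fin M → ℂ) :
    (∀ i, 0 < qftArg cell H σ2
        (fun j => (covIN cell H σ2 V j)⁻¹ *ᵥ (H (cell j) j *ᵥ V j)) V i) ∧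
    sumLeast m (fun i => Real.log (qftArg cell H σ2
        (fun j => (covIN cell H σ2 V j)⁻¹ *ᵥ (H (cell j) j *ᵥ V j)) V i)) =
      sumLeast m (fun i => rate cell H σ2 V i) ∧
    IsGreatest {r : ℝ | ∃ X : I → Fin N → ℂ, (∀ i, 0 < qftArg cell H σ2 X V i) ∧
        r = sumLeast m (fun i => Real.log (qftArg cell H σ2 X V i))}
      (sumLeast m (fun i => rate cell H σ2 V i)) := by
  set w : I → Fin N → ℂ := fun i => H (cell i) i *ᵥ V i with hw
  have hBpd : ∀ i, (covIN cell H σ2 V i).PosDef := covIN_posDef cell H hσ V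
  set X₀ : I → Fin N → ℂ := fun j => (covIN cell H σ2 V j)⁻¹ *ᵥ w j with hX₀
  have ha : ∀ i, 0 ≤ (star (w i) ⬝ᵥ (covIN cell H σ2 V i)⁻¹ *ᵥ w i).re := by
    intro i
    have := (hBpd i).inv.posSemidef.re_dotProduct_nonneg (w i)
    simpa using this
  have hargeq : ∀ i, qftArg cell H σ2 X₀ V i =
      1 + (star (w i) ⬝ᵥ (covIN cell H σ2 V i)⁻¹ *ᵥ w i).re := by
    intro i
    unfold qftArg
    have := quad_complete_eq (hBpd i) (w i)
    simp only [hX₀]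
    linarith [this]
  have hpos : ∀ i, 0 < qftArg cell H σ2 X₀ V i := by
    intro i
    rw [hargeq i]
    linarith [ha i]
  have hrate : ∀ i, Real.log (qftArg cell H σ2 X₀ V i) = rate cell H σ2 V i := by
    intro i
    rw [hargeq i]
    rfl
  have hle : ∀ (X : I → Fin N → ℂ) i,
      qftArg cell H σ2 X V i ≤ 1 + (star (w i) ⬝ᵥ (covIN cell H σ2 V i)⁻¹ *ᵥ w i).re := by
    intro X i
    unfold qftArg
    have := quad_complete (hBpd i) (w i) (X i)
    linarith [this]
  have heq2 : sumLeast m (fun i => Real.log (qftArg cell H σ2 X₀ V i)) =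
      sumLeast m (fun i => rate cell H σ2 V i) := by
    congr 1
    funext i
    exact hrate i
  refine ⟨hpos, heq2, ⟨⟨X₀, hpos, heq2.symm⟩, ?_⟩⟩
  rintro r ⟨X, hXpos, rfl⟩
  apply sumLeast_le_sumLeast hm2
  intro i
  have h1 : Real.log (qftArg cell H σ2 X V i) ≤
      Real.log (1 + (star (w i) ⬝ᵥ (covIN cell H σ2 V i)⁻¹ *ᵥ w i).re) :=
    Real.log_le_log (hXpos i) (hle X i)
  exact h1.trans_eq rfl
end

section
/- Consider the downlink MU-MIMO model with users indexed by the finite set I, channel matrices H_{b'→(k,b)} ∈ ℂ^{N×M}, noise power σ² > 0, and sum-least-m utility f_m with 1 ≤ m ≤ |I|. For beamformers V = (v_{k,b})_{(k,b)∈I}, v_{k,b} ∈ ℂ^M, and auxiliary vectors X = (χ_{k,b})_{(k,b)∈I}, χ_{k,b} ∈ ℂ^N, define φ_{k,b}(X,V) = 1 + 2·Re(χ_{k,b}† H_{b→(k,b)} v_{k,b}) − χ_{k,b}† B_{k,b}(V) χ_{k,b} and, where φ_{k,b}(X,V) > 0, r̂_{k,b}(X,V) = log φ_{k,b}(X,V).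 Then: (i) for every fixed X, the set of V with φ_{k,b}(X,V) > 0 for all (k,b) is convex, and on this set the function V ↦ f_m((r̂_{k,b}(X,V))_{(k,b)}) is concave; (ii) for every fixed V, the set of X with φ_{k,b}(X,V) > 0 for all (k,b) is convex, and on this set the function X ↦ f_m((r̂_{k,b}(X,V))_{(k,b)}) is concave. -/
open Matrix

/-! ### Auxiliary lemmas on `sumLeast` -/

section SL
variable {I : Type*} [Fintype I] {m : ℕ} {x : I → ℝ}

lemma sumLeast_set_eq (m : ℕ) (x : I → ℝ) :
    {s : ℝ | ∃ S : Finset I, S.card = m ∧ s = ∑ i ∈ S, x i} =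
      ↑(((Finset.univ : Finset (Finset I)).filter fun S => S.card = m).image
        fun S => ∑ i ∈ S, x i) := by
  ext s
  simp only [Set.mem_setOf_eq, Finset.coe_image, Set.mem_image, Finset.mem_coe,
    Finset.mem_filter, Finset.mem_univ, true_and]
  exact ⟨fun ⟨S, h1, h2⟩ => ⟨S, h1, h2.symm⟩, fun ⟨S, h1, h2⟩ => ⟨S, h1, h2.symm⟩⟩

lemma sumLeast_le {S : Finset I} (hS : S.card = m) : sumLeast m x ≤ ∑ i ∈ S, x i := by
  refine csInf_le ?_ ⟨S, hS, rfl⟩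
  rw [sumLeast_set_eq]
  exact Finset.bddBelow _

lemma exists_sumLeast (hm : m ≤ Fintype.card I) :
    ∃ S : Finset I, S.card = m ∧ sumLeast m x = ∑ i ∈ S, x i := by
  have hne : {s : ℝ | ∃ S : Finset I, S.card = m ∧ s = ∑ i ∈ S, x i}.Nonempty := by
    obtain ⟨S, -, hS⟩ :=
      Finset.exists_subset_card_eq (s := (Finset.univ : Finset I)) (by simpa using hm)
    exact ⟨∑ i ∈ S, x i, S, hS, rfl⟩
  have hfin : {s : ℝ | ∃ S : Finset I, S.card = m ∧ s = ∑ i ∈ S, x i}.Finite := by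
    rw [sumLeast_set_eq]; exact Finset.finite_toSet _
  exact hne.csInf_mem hfin

lemma sumLeast_concaveOn {E : Type*} [AddCommGroup E] [Module ℝ E] {s : Set E}
    (hs : Convex ℝ s) (f : I → E → ℝ) (hf : ∀ i, ConcaveOn ℝ s (f i))
    (hm : m ≤ Fintype.card I) :
    ConcaveOn ℝ s (fun v => sumLeast m (fun i => f i v)) := by
  refine ⟨hs, fun x hx y hy a b ha hb hab => ?_⟩
  simp only []
  obtain ⟨S, hScard, hSeq⟩ := exists_sumLeast (x := fun i => f i (a • x + b • y)) hm
  rw [hSeq]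
  calc a • sumLeast m (fun i => f i x) + b • sumLeast m (fun i => f i y)
      ≤ a • ∑ i ∈ S, f i x + b • ∑ i ∈ S, f i y := by
        gcongr
        · exact sumLeast_le hScard
        · exact sumLeast_le hScard
    _ = ∑ i ∈ S, (a • f i x + b • f i y) := by
        rw [Finset.sum_add_distrib, ← Finset.smul_sum, ← Finset.smul_sum]
    _ ≤ ∑ i ∈ S, f i (a • x + b • y) :=
        Finset.sum_le_sum fun i _ => (hf i).2 hx hy ha hb hab
end SL

/-! ### Generic convexity helpers -/

section Helpers
variable {E : Type*} [AddCommGroup E] [Module ℝ E]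

lemma convexOn_normSq_linear {f : E → ℂ} (hadd : ∀ x y, f (x + y) = f x + f y)
    (hsmul : ∀ (c : ℝ) (x : E), f (c • x) = c • f x) :
    ConvexOn ℝ Set.univ fun v => Complex.normSq (f v) := by
  refine ⟨convex_univ, fun x _ y _ a b ha hb hab => ?_⟩
  simp only []
  have hf : f (a • x + b • y) = a • f x + b • f y := by rw [hadd, hsmul, hsmul]
  have hns : ∀ z : ℂ, Complex.normSq z = ‖z‖ ^ 2 := fun z => by
    rw [Complex.sq_norm]
  rw [hf, hns, hns, hns]
  have h1 : ‖a • f x + b • f y‖ ≤ a * ‖f x‖ + b * ‖f y‖ := by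
    calc ‖a • f x + b • f y‖ ≤ ‖a • f x‖ + ‖b • f y‖ := norm_add_le _ _
      _ = a * ‖f x‖ + b * ‖f y‖ := by
        rw [norm_smul, norm_smul, Real.norm_of_nonneg ha, Real.norm_of_nonneg hb]
  have h2 : ‖a • f x + b • f y‖ ^ 2 ≤ (a * ‖f x‖ + b * ‖f y‖) ^ 2 := by
    apply sq_le_sq' _ h1
    have := norm_nonneg (a • f x + b • f y)
    nlinarith [norm_nonneg (f x), norm_nonneg (f y)]
  refine h2.trans ?_
  simp only [smul_eq_mul]
  nlinarith [sq_nonneg (‖f x‖ - ‖f y‖), norm_nonneg (f x), norm_nonneg (f y),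
    mul_nonneg ha hb]

lemma concaveOn_linear_add_const {f : E → ℝ} (hadd : ∀ x y, f (x + y) = f x + f y)
    (hsmul : ∀ (c : ℝ) (x : E), f (c • x) = c • f x) (c : ℝ) :
    ConcaveOn ℝ Set.univ fun v => f v + c := by
  have := (LinearMap.mk ⟨f, hadd⟩ hsmul : E →ₗ[ℝ] ℝ).concaveOn convex_univ
  exact this.add_const c

lemma convexOn_finset_sum {ι : Type*} {t : Finset ι} {s : Set E} (hs : Convex ℝ s)
    {F : ι → E → ℝ} (hF : ∀ j ∈ t, ConvexOn ℝ s (F j)) :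
    ConvexOn ℝ s fun v => ∑ j ∈ t, F j v := by
  classical
  induction t using Finset.cons_induction with
  | empty => simpa using convexOn_const 0 hs
  | cons a t' ha ih =>
    simp only [Finset.sum_cons]
    exact (hF a (Finset.mem_cons_self a t')).add
      (ih fun j hjt => hF j (Finset.mem_cons_of_mem hjt))

lemma concaveOn_log_comp {s : Set E} {f : E → ℝ} (hf : ConcaveOn ℝ Set.univ f)
    (hs : Convex ℝ s) (hpos : ∀ x ∈ s, 0 < f x) :
    ConcaveOn ℝ s fun x => Real.log (f x) := by
  refine ⟨hs, fun x hx y hy a b ha hb hab => ?_⟩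
  simp only []
  have h1 : a • f x + b • f y ≤ f (a • x + b • y) :=
    hf.2 (Set.mem_univ x) (Set.mem_univ y) ha hb hab
  have hxpos := hpos x hx
  have hypos := hpos y hy
  have h0 : 0 < a • f x + b • f y := by
    simp only [smul_eq_mul]
    rcases lt_or_eq_of_le ha with ha' | ha'
    · exact add_pos_of_pos_of_nonneg (mul_pos ha' hxpos) (mul_nonneg hb hypos.le)
    · have hb1 : b = 1 := by linarith
      rw [← ha', hb1]; simpa using hypos
  calc a • Real.log (f x) + b • Real.log (f y)
      ≤ Real.log (a • f x + b • f y) :=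
        strictConcaveOn_log_Ioi.concaveOn.2 (Set.mem_Ioi.2 hxpos) (Set.mem_Ioi.2 hypos) ha hb hab
    _ ≤ Real.log (f (a • x + b • y)) := Real.log_le_log h0 h1
end Helpers

/-! ### Expansion of `qftArg` -/

section Expand
variable {I B' : Type*} [Fintype I] [DecidableEq I] {N M : ℕ}

lemma star_dot_vecMulVec (u χ : Fin N → ℂ) :
    star χ ⬝ᵥ (vecMulVec u (star u)) *ᵥ χ = (star χ ⬝ᵥ u) * star (star χ ⬝ᵥ u) := by
  simp only [dotProduct, mulVec, vecMulVec_apply, Pi.star_apply, star_sum, star_mul',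
    star_star, dotProduct]
  rw [Finset.sum_mul_sum]
  refine Finset.sum_congr rfl fun k _ => ?_
  rw [Finset.mul_sum]
  exact Finset.sum_congr rfl fun l _ => by ring

lemma sum_mulVec' {ι : Type*} (t : Finset ι) (f : ι → Matrix (Fin N) (Fin N) ℂ)
    (v : Fin N → ℂ) : (∑ j ∈ t, f j) *ᵥ v = ∑ j ∈ t, f j *ᵥ v := by
  classical
  induction t using Finset.cons_induction with
  | empty => simp [Matrix.zero_mulVec]
  | cons a t' ha ih => rw [Finset.sum_cons, Finset.sum_cons, add_mulVec, ih]

lemma dotProduct_sum' {ι : Type*} (t : Finset ι) (w : Fin N → ℂ) (f : ι → Fin N → ℂ) :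
    w ⬝ᵥ (∑ j ∈ t, f j) = ∑ j ∈ t, w ⬝ᵥ f j := by
  classical
  induction t using Finset.cons_induction with
  | empty => simp
  | cons a t' ha ih => rw [Finset.sum_cons, Finset.sum_cons, dotProduct_add, ih]

lemma qftArg_eq (cell : I → B') (H : B' → I → Matrix (Fin N) (Fin M) ℂ)
    (σ2 : ℝ) (X : I → Fin N → ℂ) (V : I → Fin M → ℂ) (i : I) :
    qftArg cell H σ2 X V i =
      1 + 2 * (star (X i) ⬝ᵥ (H (cell i) i *ᵥ V i)).re
        - σ2 * ∑ k, Complex.normSq (X i k)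
        - ∑ j ∈ Finset.univ.erase i,
            Complex.normSq (star (X i) ⬝ᵥ (H (cell j) i *ᵥ V j)) := by
  unfold qftArg covIN
  rw [add_mulVec, smul_mulVec, one_mulVec, dotProduct_add, dotProduct_smul]
  have hsum : star (X i) ⬝ᵥ (∑ j ∈ Finset.univ.erase i,
      vecMulVec (H (cell j) i *ᵥ V j) (star (H (cell j) i *ᵥ V j))) *ᵥ X i =
      ∑ j ∈ Finset.univ.erase i,
        ((star (X i) ⬝ᵥ (H (cell j) i *ᵥ V j)) *
          star (star (X i) ⬝ᵥ (H (cell j) i *ᵥ V j))) := by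
    rw [sum_mulVec', dotProduct_sum']
    exact Finset.sum_congr rfl fun j _ => star_dot_vecMulVec _ _
  rw [hsum]
  have h1 : ((σ2 : ℂ) • (star (X i) ⬝ᵥ X i)).re = σ2 * ∑ k, Complex.normSq (X i k) := by
    simp [dotProduct, Complex.mul_re, Complex.normSq_apply, Finset.mul_sum, Complex.mul_conj]
  have h2 : (∑ j ∈ Finset.univ.erase i,
      ((star (X i) ⬝ᵥ (H (cell j) i *ᵥ V j)) *
        star (star (X i) ⬝ᵥ (H (cell j) i *ᵥ V j)))).re =
      ∑ j ∈ Finset.univ.erase i, Complex.normSq (star (X i) ⬝ᵥ (H (cell j) i *ᵥ V j)) := by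
    rw [Complex.re_sum]
    exact Finset.sum_congr rfl fun j _ => by
      rw [RCLike.star_def, Complex.mul_conj]; simp
  rw [Complex.add_re, h1, h2]
  ring

/-! ### Blockwise concavity of `qftArg` -/

lemma qftArg_concaveOn_V (cell : I → B') (H : B' → I → Matrix (Fin N) (Fin M) ℂ)
    (σ2 : ℝ) (X : I → Fin N → ℂ) (i : I) :
    ConcaveOn ℝ Set.univ fun V : I → Fin M → ℂ => qftArg cell H σ2 X V i := by
  have keyadd : ∀ (j : I) (V W : I → Fin M → ℂ),
      star (X i) ⬝ᵥ (H (cell j) i *ᵥ (V + W) j) =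
        star (X i) ⬝ᵥ (H (cell j) i *ᵥ V j) + star (X i) ⬝ᵥ (H (cell j) i *ᵥ W j) := by
    intro j V W
    rw [Pi.add_apply, Matrix.mulVec_add, dotProduct_add]
  have keysmul : ∀ (j : I) (c : ℝ) (V : I → Fin M → ℂ),
      star (X i) ⬝ᵥ (H (cell j) i *ᵥ (c • V) j) =
        (c : ℂ) * (star (X i) ⬝ᵥ (H (cell j) i *ᵥ V j)) := by
    intro j c V
    have h1 : (c • V) j = (c : ℂ) • V j := by
      funext k; simp [Complex.real_smul]
    rw [h1, Matrix.mulVec_smul, dotProduct_smul, smul_eq_mul]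
  have heq : (fun V : I → Fin M → ℂ => qftArg cell H σ2 X V i) =
      fun V => (2 * (star (X i) ⬝ᵥ (H (cell i) i *ᵥ V i)).re +
          (1 - σ2 * ∑ k, Complex.normSq (X i k))) -
        ∑ j ∈ Finset.univ.erase i,
          Complex.normSq (star (X i) ⬝ᵥ (H (cell j) i *ᵥ V j)) := by
    funext V; rw [qftArg_eq]; ring
  rw [heq]
  refine ConcaveOn.sub ?_ ?_
  · refine concaveOn_linear_add_const ?_ ?_ _
    · intro V W; rw [keyadd]; rw [Complex.add_re]; ring
    · intro c V; rw [keysmul]; simp only [Complex.mul_re, Complex.ofReal_re,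
        Complex.ofReal_im, smul_eq_mul]; ring
  · refine convexOn_finset_sum convex_univ fun j _ => ?_
    refine convexOn_normSq_linear (fun V W => keyadd j V W) fun c V => ?_
    rw [keysmul, Complex.real_smul]

lemma qftArg_concaveOn_X (cell : I → B') (H : B' → I → Matrix (Fin N) (Fin M) ℂ)
    {σ2 : ℝ} (hσ : 0 ≤ σ2) (V : I → Fin M → ℂ) (i : I) :
    ConcaveOn ℝ Set.univ fun X : I → Fin N → ℂ => qftArg cell H σ2 X V i := by
  have staradd : ∀ (X Y : I → Fin N → ℂ) (w : Fin N → ℂ),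
      star ((X + Y) i) ⬝ᵥ w = star (X i) ⬝ᵥ w + star (Y i) ⬝ᵥ w := by
    intro X Y w
    rw [Pi.add_apply, star_add, add_dotProduct]
  have starsmul : ∀ (c : ℝ) (X : I → Fin N → ℂ) (w : Fin N → ℂ),
      star ((c • X) i) ⬝ᵥ w = (c : ℂ) * (star (X i) ⬝ᵥ w) := by
    intro c X w
    have h1 : star ((c • X) i) = (c : ℂ) • star (X i) := by
      funext k
      simp [Complex.real_smul, Pi.smul_apply, _root_.map_mul, Complex.conj_ofReal]
    rw [h1, smul_dotProduct, smul_eq_mul]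
  have heq : (fun X : I → Fin N → ℂ => qftArg cell H σ2 X V i) =
      fun X => (2 * (star (X i) ⬝ᵥ (H (cell i) i *ᵥ V i)).re + 1) -
        ((σ2 * ∑ k, Complex.normSq (X i k)) +
          ∑ j ∈ Finset.univ.erase i,
            Complex.normSq (star (X i) ⬝ᵥ (H (cell j) i *ᵥ V j))) := by
    funext X; rw [qftArg_eq]; ring
  rw [heq]
  refine ConcaveOn.sub ?_ (ConvexOn.add ?_ ?_)
  · refine concaveOn_linear_add_const ?_ ?_ _
    · intro X Y; rw [staradd]; rw [Complex.add_re]; ring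
    · intro c X; rw [starsmul]; simp only [Complex.mul_re, Complex.ofReal_re,
        Complex.ofReal_im, smul_eq_mul]; ring
  · have hsum : ConvexOn ℝ Set.univ
        fun X : I → Fin N → ℂ => ∑ k, Complex.normSq (X i k) := by
      refine convexOn_finset_sum convex_univ fun k _ => ?_
      exact convexOn_normSq_linear (fun X Y => rfl) fun c X => by
        simp [Pi.smul_apply, Complex.real_smul]
    have h := hsum.smul hσ
    have heq2 : (fun X : I → Fin N → ℂ => σ2 * ∑ k, Complex.normSq (X i k)) =
        σ2 • fun X : I → Fin N → ℂ => ∑ k, Complex.normSq (X i k) := by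
      funext X; simp [Pi.smul_apply, smul_eq_mul]
    rw [heq2]; exact h
  · refine convexOn_finset_sum convex_univ fun j _ => ?_
    refine convexOn_normSq_linear (fun X Y => staradd X Y _) fun c X => ?_
    rw [starsmul, Complex.real_smul]

end Expand

/-- Theorem 2 (block-concavity of the auxiliary QFT objective): (i) for every fixed `X`,
the set of `V` with all `φ_{k,b}(X,V) > 0` is convex and on it
`V ↦ f_m((log φ_{k,b}(X,V))_{k,b})` is concave; (ii) for every fixed `V`, the set of `X`
with all `φ_{k,b}(X,V) > 0` is convex and on it `X ↦ f_m((log φ_{k,b}(X,V))_{k,b})` is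
concave. -/
theorem qft_block_concave {I B' : Type*} [Fintype I] [DecidableEq I] {N M : ℕ}
    (cell : I → B') (H : B' → I → Matrix (Fin N) (Fin M) ℂ)
    (σ2 : ℝ) (hσ : 0 < σ2) (m : ℕ) (hm1 : 1 ≤ m) (hm2 : m ≤ Fintype.card I) :
    (∀ X : I → Fin N → ℂ,
      Convex ℝ {V : I → Fin M → ℂ | ∀ i, 0 < qftArg cell H σ2 X V i} ∧
      ConcaveOn ℝ {V : I → Fin M → ℂ | ∀ i, 0 < qftArg cell H σ2 X V i}
        (fun V => sumLeast m (fun i => Real.log (qftArg cell H σ2 X V i)))) ∧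
    (∀ V : I → Fin M → ℂ,
      Convex ℝ {X : I → Fin N → ℂ | ∀ i, 0 < qftArg cell H σ2 X V i} ∧
      ConcaveOn ℝ {X : I → Fin N → ℂ | ∀ i, 0 < qftArg cell H σ2 X V i}
        (fun X => sumLeast m (fun i => Real.log (qftArg cell H σ2 X V i)))) := by
  constructor
  · intro X
    have hconvset : Convex ℝ {V : I → Fin M → ℂ | ∀ i, 0 < qftArg cell H σ2 X V i} := by
      have : {V : I → Fin M → ℂ | ∀ i, 0 < qftArg cell H σ2 X V i} =
          ⋂ i, {V : I → Fin M → ℂ | 0 < qftArg cell H σ2 X V i} := by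
        ext V; simp [Set.mem_iInter]
      rw [this]
      refine convex_iInter fun i => ?_
      have := (qftArg_concaveOn_V cell H σ2 X i).convex_gt 0
      rwa [Set.sep_univ] at this
    refine ⟨hconvset, ?_⟩
    exact sumLeast_concaveOn hconvset
      (fun i V => Real.log (qftArg cell H σ2 X V i))
      (fun i => concaveOn_log_comp (qftArg_concaveOn_V cell H σ2 X i) hconvset
        fun V hV => hV i) hm2
  · intro V
    have hconvset : Convex ℝ {X : I → Fin N → ℂ | ∀ i, 0 < qftArg cell H σ2 X V i} := by
      have : {X : I → Fin N → ℂ | ∀ i, 0 < qftArg cell H σ2 X V i} =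
          ⋂ i, {X : I → Fin N → ℂ | 0 < qftArg cell H σ2 X V i} := by
        ext X; simp [Set.mem_iInter]
      rw [this]
      refine convex_iInter fun i => ?_
      have := (qftArg_concaveOn_X cell H hσ.le V i).convex_gt 0
      rwa [Set.sep_univ] at this
    refine ⟨hconvset, ?_⟩
    exact sumLeast_concaveOn hconvset
      (fun i X => Real.log (qftArg cell H σ2 X V i))
      (fun i => concaveOn_log_comp (qftArg_concaveOn_X cell H hσ.le V i) hconvset
        fun X hX => hX i) hm2
end
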